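/- With a_{n,k} defined by the admissible-matrix recurrence, a_{n,n} = 1 for all n ≥ 0 and a_{n,k} = 0 for k > n; hence the Hankel determinant det(a_{i+j,0})_{i,j=0}^{n-1} = 1 for every n ≥ 1. -/
import Mathlib


/-- For the admissible matrix `a` of a sequence `s`: `a n n = 1`, `a n k = 0` for
`k > n`, and the Hankel determinant `det (a (i+j) 0)_{i,j=0}^{n-1} = 1` for `n ≥ 1`. -/
theorem admissible_hankel_det_one (s : ℕ → ℝ) (a : ℕ → ℤ → ℝ)
    (h0 : ∀ k : ℤ, a 0 k = if k = 0 then 1 else 0)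
    (hneg : ∀ (n : ℕ) (k : ℤ), k < 0 → a n k = 0)
    (hrec : ∀ (n : ℕ) (k : ℤ), 0 ≤ k →
      a (n + 1) k = a n (k - 1) + s k.toNat * a n k + a n (k + 1)) :
    (∀ n : ℕ, a n (n : ℤ) = 1) ∧
    (∀ (n : ℕ) (k : ℤ), (n : ℤ) < k → a n k = 0) ∧
    (∀ n : ℕ, 1 ≤ n →
      Matrix.det (Matrix.of fun i j : Fin n => a ((i : ℕ) + (j : ℕ)) 0) = 1) := by
  -- upper zero
  have hup : ∀ (n : ℕ) (k : ℤ), (n : ℤ) < k → a n k = 0 := by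
    intro n
    induction n with
    | zero => intro k hk; rw [h0]; simp; omega
    | succ n ih =>
      intro k hk
      have hk0 : (0:ℤ) ≤ k := by push_cast at hk ⊢; omega
      rw [hrec n k hk0, ih (k-1) (by push_cast at hk ⊢; omega),
        ih k (by push_cast at hk ⊢; omega), ih (k+1) (by push_cast at hk ⊢; omega)]
      ring
  -- diagonal one
  have hdiag : ∀ n : ℕ, a n (n : ℤ) = 1 := by
    intro n
    induction n with
    | zero => simp [h0]
    | succ n ih =>
      rw [show (((n+1:ℕ)) : ℤ) = (n:ℤ) + 1 by push_cast; ring,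
        hrec n ((n:ℤ)+1) (by positivity)]
      simp only [add_sub_cancel_right]
      rw [ih, hup n ((n:ℤ)+1) (by omega), hup n ((n:ℤ)+1+1) (by omega)]
      ring
  refine ⟨hdiag, hup, ?_⟩
  -- convolution identity
  have conv : ∀ (n m : ℕ), a (m + n) 0 =
      ∑ k ∈ Finset.range (n+1), a m (k:ℤ) * a n (k:ℤ) := by
    intro n
    induction n with
    | zero => intro m; simp [h0]
    | succ n ih =>
      intro m
      have h1 : a (m + (n+1)) 0 = ∑ k ∈ Finset.range (n+1), a (m+1) (k:ℤ) * a n (k:ℤ) := by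
        rw [show m + (n+1) = (m+1) + n by ring]; exact ih (m+1)
      rw [h1]
      have expandL : ∀ k ∈ Finset.range (n+1), a (m+1) (k:ℤ) * a n (k:ℤ) =
          a m ((k:ℤ)-1) * a n (k:ℤ) + s k * (a m (k:ℤ) * a n (k:ℤ))
            + a m ((k:ℤ)+1) * a n (k:ℤ) := by
        intro k _
        rw [hrec m (k:ℤ) (by positivity)]
        simp only [Int.toNat_natCast]
        ring
      have expandR : ∀ k ∈ Finset.range (n+2), a m (k:ℤ) * a (n+1) (k:ℤ) =
          a m (k:ℤ) * a n ((k:ℤ)-1) + s k * (a m (k:ℤ) * a n (k:ℤ))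
            + a m (k:ℤ) * a n ((k:ℤ)+1) := by
        intro k _
        rw [hrec n (k:ℤ) (by positivity)]
        simp only [Int.toNat_natCast]
        ring
      rw [Finset.sum_congr rfl expandL, Finset.sum_congr rfl expandR,
        Finset.sum_add_distrib, Finset.sum_add_distrib,
        Finset.sum_add_distrib, Finset.sum_add_distrib]
      have e1 : ∑ k ∈ Finset.range (n+1), a m ((k:ℤ)-1) * a n (k:ℤ)
          = ∑ k ∈ Finset.range (n+2), a m (k:ℤ) * a n ((k:ℤ)+1) := by
        rw [Finset.sum_range_succ' (fun k => a m ((k:ℤ)-1) * a n (k:ℤ)) n,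
          Finset.sum_range_succ, Finset.sum_range_succ]
        have zA : a n (((n:ℕ):ℤ)+1) = 0 := hup n _ (by push_cast; omega)
        have zB : a n (((n+1:ℕ):ℤ)+1) = 0 := hup n _ (by push_cast; omega)
        have z0 : a m (((0:ℕ):ℤ)-1) * a n ((0:ℕ):ℤ) = 0 := by
          rw [hneg m _ (by norm_num)]; ring
        rw [z0, zA, zB]
        simp only [mul_zero, add_zero]
        apply Finset.sum_congr rfl
        intro k _
        push_cast
        ring_nf
      have e2 : ∑ k ∈ Finset.range (n+1), s k * (a m (k:ℤ) * a n (k:ℤ))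
          = ∑ k ∈ Finset.range (n+2), s k * (a m (k:ℤ) * a n (k:ℤ)) := by
        rw [Finset.sum_range_succ (fun k => s k * (a m (k:ℤ) * a n (k:ℤ))) (n+1)]
        rw [hup n (((n+1:ℕ)):ℤ) (by push_cast; omega)]
        ring
      have e3 : ∑ k ∈ Finset.range (n+1), a m ((k:ℤ)+1) * a n (k:ℤ)
          = ∑ k ∈ Finset.range (n+2), a m (k:ℤ) * a n ((k:ℤ)-1) := by
        rw [Finset.sum_range_succ' (fun k => a m (k:ℤ) * a n ((k:ℤ)-1)) (n+1)]
        have z0 : a m ((0:ℕ):ℤ) * a n (((0:ℕ):ℤ)-1) = 0 := by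
          rw [hneg n _ (by norm_num)]; ring
        rw [z0, add_zero]
        apply Finset.sum_congr rfl
        intro k _
        push_cast
        ring_nf
      rw [e1, e2, e3]
      ring
  -- determinant
  intro n hn
  set M : Matrix (Fin n) (Fin n) ℝ := Matrix.of fun i k : Fin n => a i (k:ℤ) with hM
  have hfact : (Matrix.of fun i j : Fin n => a ((i : ℕ) + (j : ℕ)) 0) = M * M.transpose := by
    ext i j
    simp only [Matrix.mul_apply, Matrix.transpose_apply, hM, Matrix.of_apply]
    rw [conv j i]
    have hfin : ∑ x : Fin n, a (i:ℕ) ((x:ℕ):ℤ) * a (j:ℕ) ((x:ℕ):ℤ)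
        = ∑ k ∈ Finset.range n, a (i:ℕ) (k:ℤ) * a (j:ℕ) (k:ℤ) :=
      Fin.sum_univ_eq_sum_range (fun k : ℕ => a (i:ℕ) (k:ℤ) * a (j:ℕ) (k:ℤ)) n
    rw [hfin]
    apply Finset.sum_subset (Finset.range_subset_range.mpr (by omega : (j:ℕ)+1 ≤ n))
    intro k _ hk
    rw [hup j (k:ℤ) (by simp at hk; push_cast; omega)]
    ring
  rw [hfact, Matrix.det_mul, Matrix.det_transpose]
  have hdet : M.det = 1 := by
    have htri : M.BlockTriangular OrderDual.toDual := by
      intro i j hij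
      exact hup i (j:ℤ) (by exact_mod_cast (show (i:ℕ) < (j:ℕ) from hij))
    rw [Matrix.det_of_lowerTriangular M htri]
    apply Finset.prod_eq_one
    intro i _
    exact hdiag i
  rw [hdet]; norm_num
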